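/- Let K be the 3×3 real matrix K = [[0, 2, 0], [−2, 0, 2], [0, −2, 0]]. Then for every real number c, the matrix exponential satisfies exp(c·K) · (0, 0, 1)ᵀ = (sin²(√2·c), √2·sin(√2·c)·cos(√2·c), cos²(√2·c))ᵀ. (This is the continuous-time description of the parallel Grover dynamics for k = 2 on the main-path states (e₁e₂, e₁N₂, N₁N₂): starting from the source state N₁N₂, the amplitude of the sink state e₁e₂ evolves as sin²(√2 c).) -/

import Mathlib

open Matrix Real

/-- The generator of the continuous-time parallel Grover dynamics for `k = 2`
on the main-path states `(e₁e₂, e₁N₂, N₁N₂)`. -/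
noncomputable def Kgen : Matrix (Fin 3) (Fin 3) ℝ :=
  !![0, 2, 0; -2, 0, 2; 0, -2, 0]

attribute [local instance] Matrix.linftyOpNormedRing Matrix.linftyOpNormedAlgebra

/-- Candidate closed form for `exp (c • Kgen)`. -/
noncomputable def Emat (c : ℝ) : Matrix (Fin 3) (Fin 3) ℝ :=
  1 + (Real.sin (2 * Real.sqrt 2 * c) / (2 * Real.sqrt 2)) • Kgen
    + ((1 - Real.cos (2 * Real.sqrt 2 * c)) / 8) • (Kgen * Kgen)

lemma Kgen_cube : Kgen * Kgen * Kgen = (-8 : ℝ) • Kgen := by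
  ext i j
  fin_cases i <;> fin_cases j <;>
    simp [Kgen, Matrix.mul_apply, Fin.sum_univ_succ] <;> norm_num

lemma sqrt2_pos : (0:ℝ) < Real.sqrt 2 := Real.sqrt_pos.mpr (by norm_num)

lemma Emat_zero : Emat 0 = 1 := by
  simp [Emat]

lemma Emat_hasDerivAt (c : ℝ) : HasDerivAt Emat (Kgen * Emat c) c := by
  have hω : (2 * Real.sqrt 2 : ℝ) ≠ 0 := by positivity
  have hlin : HasDerivAt (fun c : ℝ => 2 * Real.sqrt 2 * c) (2 * Real.sqrt 2) c := by
    simpa using (hasDerivAt_id c).const_mul (2 * Real.sqrt 2)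
  have hsin : HasDerivAt (fun c : ℝ => Real.sin (2 * Real.sqrt 2 * c) / (2 * Real.sqrt 2))
      (Real.cos (2 * Real.sqrt 2 * c)) c := by
    have := ((Real.hasDerivAt_sin (2 * Real.sqrt 2 * c)).comp c hlin).div_const (2 * Real.sqrt 2)
    refine this.congr_deriv ?_
    field_simp
  have hcos : HasDerivAt (fun c : ℝ => (1 - Real.cos (2 * Real.sqrt 2 * c)) / 8)
      (Real.sin (2 * Real.sqrt 2 * c) / (2 * Real.sqrt 2)) c := by
    have := ((hasDerivAt_const c (1:ℝ)).sub
      ((Real.hasDerivAt_cos (2 * Real.sqrt 2 * c)).comp c hlin)).div_const 8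
    refine this.congr_deriv ?_
    have h2 : Real.sqrt 2 * Real.sqrt 2 = 2 := Real.mul_self_sqrt (by norm_num)
    field_simp
    linear_combination (4 * Real.sin (2 * Real.sqrt 2 * c)) * h2
  have hD : HasDerivAt Emat
      (Real.cos (2 * Real.sqrt 2 * c) • Kgen
        + (Real.sin (2 * Real.sqrt 2 * c) / (2 * Real.sqrt 2)) • (Kgen * Kgen)) c := by
    have := ((hasDerivAt_const c (1 : Matrix (Fin 3) (Fin 3) ℝ)).add
      (hsin.smul_const Kgen)).add (hcos.smul_const (Kgen * Kgen))
    exact this.congr_deriv (by rw [zero_add])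
  convert hD using 1
  have : Kgen * Emat c
      = Kgen + (Real.sin (2 * Real.sqrt 2 * c) / (2 * Real.sqrt 2)) • (Kgen * Kgen)
        + ((1 - Real.cos (2 * Real.sqrt 2 * c)) / 8) • ((-8 : ℝ) • Kgen) := by
    rw [Emat]
    rw [mul_add, mul_add, mul_one, Matrix.mul_smul, Matrix.mul_smul, ← mul_assoc, Kgen_cube]
  rw [this, smul_smul]
  have h8 : (1 - Real.cos (2 * Real.sqrt 2 * c)) / 8 * (-8)
      = Real.cos (2 * Real.sqrt 2 * c) - 1 := by ring
  rw [h8, sub_smul, one_smul]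
  abel

lemma exp_eq_Emat (c : ℝ) : NormedSpace.exp (c • Kgen) = Emat c := by
  have hdF : ∀ t : ℝ,
      HasDerivAt (fun u : ℝ => NormedSpace.exp (u • (-Kgen)) * Emat u) 0 t := by
    intro t
    have h1 : HasDerivAt (fun u : ℝ => NormedSpace.exp (u • (-Kgen)))
        ((-Kgen) * NormedSpace.exp (t • (-Kgen))) t :=
      hasDerivAt_exp_smul_const' (-Kgen) t
    have h2 := Emat_hasDerivAt t
    have hprod := h1.mul h2
    have hcomm : Commute (NormedSpace.exp (t • (-Kgen))) Kgen := by
      refine Commute.exp_left ?_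
      simpa using ((Commute.refl Kgen).neg_left.smul_left t)
    have hz : (-Kgen) * NormedSpace.exp (t • (-Kgen)) * Emat t
        + NormedSpace.exp (t • (-Kgen)) * (Kgen * Emat t) = 0 := by
      rw [← mul_assoc, hcomm.eq, neg_mul, neg_mul, neg_add_cancel]
    exact hprod.congr_deriv hz
  have hconst : NormedSpace.exp (c • (-Kgen)) * Emat c
      = NormedSpace.exp ((0:ℝ) • (-Kgen)) * Emat 0 :=
    is_const_of_deriv_eq_zero (fun x => (hdF x).differentiableAt)
      (fun x => (hdF x).deriv) c 0
  have hkey : NormedSpace.exp (c • (-Kgen)) * Emat c = 1 := by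
    rw [hconst, Emat_zero, mul_one, zero_smul, NormedSpace.exp_zero]
  have hinv : NormedSpace.exp (c • Kgen) * NormedSpace.exp (c • (-Kgen)) = 1 := by
    rw [← Matrix.exp_add_of_commute]
    · simp
    · simpa using (Commute.refl Kgen).neg_right.smul_left c |>.smul_right c
  calc NormedSpace.exp (c • Kgen)
      = NormedSpace.exp (c • Kgen) * (NormedSpace.exp (c • (-Kgen)) * Emat c) := by
        rw [hkey, mul_one]
    _ = (NormedSpace.exp (c • Kgen) * NormedSpace.exp (c • (-Kgen))) * Emat c := by
        rw [mul_assoc]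
    _ = Emat c := by rw [hinv, one_mul]

theorem exp_K_mulVec (c : ℝ) :
    (NormedSpace.exp (c • Kgen)).mulVec ![0, 0, 1] =
      ![Real.sin (Real.sqrt 2 * c) ^ 2,
        Real.sqrt 2 * Real.sin (Real.sqrt 2 * c) * Real.cos (Real.sqrt 2 * c),
        Real.cos (Real.sqrt 2 * c) ^ 2] := by
  rw [exp_eq_Emat]
  have h2 : Real.sqrt 2 * Real.sqrt 2 = 2 := Real.mul_self_sqrt (by norm_num)
  have hx : 2 * Real.sqrt 2 * c = 2 * (Real.sqrt 2 * c) := by ring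
  funext i
  fin_cases i <;>
    simp [Emat, Kgen, Matrix.mulVec, Matrix.mul_apply, dotProduct, Fin.sum_univ_succ,
      Matrix.one_apply, hx, Real.cos_two_mul, Real.sin_two_mul]
  · nlinarith [Real.sin_sq_add_cos_sq (Real.sqrt 2 * c)]
  · field_simp
    linear_combination (-Real.sin (Real.sqrt 2 * c) * Real.cos (Real.sqrt 2 * c)) * h2
  · nlinarith [Real.sin_sq_add_cos_sq (Real.sqrt 2 * c)]
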